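/- Let Y be a graph and Z a graph on a superset of relations: suppose ι : V(Y) → V(Z) is a vertex bijection (onto its image) with the property that every edge of Y maps to an edge of Z, and whenever d_Z(ι(y), ι(y′)) = 1 but {y, y′} is not an edge of Y, one has d_Y(y, y′) ≤ 2; and whenever d_Z(ι(y), ι(y′)) = n ≥ 3 there is a Z-geodesic between them all of whose consecutive pairs are Y-edges. Then for all y, y′: d_Z(ι(y), ι(y′)) ≤ d_Y(y, y′) ≤ d_Z(ι(y), ι(y′)) + 2, provided additionally d_Z = 2 implies d_Y ≤ 4. (Abstract form of Corollary: the crossing graph embeds (1,2)-quasi-isometrically in the arc graph.) -/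
import Mathlib


/-- Abstract form of the quasi-isometric embedding of the crossing graph in the
arc graph.  Let `ι` be an injective vertex map from a connected graph `Y` to a
connected graph `Z` sending edges to edges.  Suppose: if `d_Z(ι y, ι y') = 1`
then `d_Y(y, y') ≤ 2`; if `d_Z(ι y, ι y') = 2` then `d_Y(y, y') ≤ 4`; and if
`d_Z(ι y, ι y') ≥ 3` then there is a walk in `Y` from `y` to `y'` of length
`d_Z(ι y, ι y')` (a `Z`-geodesic all of whose consecutive pairs are `Y`-edges).
Then `d_Z(ι y, ι y') ≤ d_Y(y, y') ≤ d_Z(ι y, ι y') + 2` for all `y, y'`. -/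
theorem crossing_graph_qi_embedding {VY VZ : Type*}
    (Y : SimpleGraph VY) (Z : SimpleGraph VZ)
    (hY : Y.Connected) (hZ : Z.Connected)
    (ι : VY → VZ) (hinj : Function.Injective ι)
    (hedge : ∀ y y', Y.Adj y y' → Z.Adj (ι y) (ι y'))
    (h1 : ∀ y y', Z.dist (ι y) (ι y') = 1 → Y.dist y y' ≤ 2)
    (h2 : ∀ y y', Z.dist (ι y) (ι y') = 2 → Y.dist y y' ≤ 4)
    (h3 : ∀ y y', 3 ≤ Z.dist (ι y) (ι y') →
      ∃ w : Y.Walk y y', w.length = Z.dist (ι y) (ι y')) :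
    ∀ y y', Z.dist (ι y) (ι y') ≤ Y.dist y y' ∧
      Y.dist y y' ≤ Z.dist (ι y) (ι y') + 2 := by
  intro y y'
  let f : Y →g Z := ⟨ι, fun {a b} h => hedge a b h⟩
  constructor
  · obtain ⟨w, hw⟩ := hY.exists_walk_length_eq_dist y y'
    calc Z.dist (ι y) (ι y') ≤ (w.map f).length := SimpleGraph.dist_le _
      _ = Y.dist y y' := by rw [SimpleGraph.Walk.length_map, hw]
  · rcases Nat.lt_or_ge (Z.dist (ι y) (ι y')) 3 with h | h
    · set n := Z.dist (ι y) (ι y') with hn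
      interval_cases n
      · have : y = y' := hinj (hZ.dist_eq_zero_iff.mp hn.symm)
        subst this; simp [SimpleGraph.dist_self]
      · have := h1 y y' hn.symm; omega
      · have := h2 y y' hn.symm; omega
    · obtain ⟨w, hw⟩ := h3 y y' h
      have := SimpleGraph.dist_le w
      omega
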